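/- Let A be the (N+1)×(N+1) moment-closure coefficient matrix described by superdiagonal entries (i+1)/(2i+1), subdiagonal entries i/(2i+1), last row (a_0,...,a_N). If all roots of q_{N+1}(x) = ((N+1)/(2N+1)) P_{N+1}(x) + (N/(2N+1)) P_{N-1}(x) - Σ_{k=0}^{N} a_k P_k(x) are simple and real, then A has N+1 distinct real eigenvalues, i.e., A is diagonalizable over the reals. -/

import Mathlib

open Polynomial Matrix

/-- Entry of a matrix viewed with natural-number (0-based) indices; `0` out of range. -/
def entryR {n : ℕ} (H : Matrix (Fin n) (Fin n) ℝ) (i j : ℕ) : ℝ :=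
  if h : i < n ∧ j < n then H ⟨i, h.1⟩ ⟨j, h.2⟩ else 0

/-- `q` is the polynomial sequence associated with the unreduced lower Hessenberg matrix `H`:
`q 0 = 1` and `h_{i,i+1} q_{i+1} = X q_i - ∑_{j ≤ i} h_{i j} q_j` (0-based indices),
with the convention that the superdiagonal entry of the last row is `1`. -/
def IsAssocPolySeq {n : ℕ} (H : Matrix (Fin n) (Fin n) ℝ) (q : ℕ → Polynomial ℝ) : Prop :=
  q 0 = 1 ∧
  ∀ i : ℕ, i < n →
    Polynomial.C (if i + 1 = n then 1 else entryR H i (i + 1)) * q (i + 1) =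
      Polynomial.X * q i - ∑ j ∈ Finset.range (i + 1), Polynomial.C (entryR H i j) * q j

/-- The `n`-th Legendre polynomial, via Rodrigues' formula. -/
noncomputable def legendreP (n : ℕ) : Polynomial ℝ :=
  Polynomial.C (1 / ((2 ^ n * n.factorial : ℕ) : ℝ)) *
    (Polynomial.derivative^[n] ((Polynomial.X ^ 2 - 1) ^ n))

/-- The `(N+1)×(N+1)` moment-closure coefficient matrix: superdiagonal entries
`(i+1)/(2i+1)` and subdiagonal entries `i/(2i+1)` in rows `0,…,N-1`, last row
`(a_0, …, a_N)`, all other entries zero. -/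
noncomputable def momentA (N : ℕ) (a : Fin (N + 1) → ℝ) :
    Matrix (Fin (N + 1)) (Fin (N + 1)) ℝ :=
  fun i j =>
    if (i : ℕ) = N then a j
    else if (j : ℕ) = (i : ℕ) + 1 then (((i : ℕ) : ℝ) + 1) / (2 * ((i : ℕ) : ℝ) + 1)
    else if (i : ℕ) = (j : ℕ) + 1 then ((i : ℕ) : ℝ) / (2 * ((i : ℕ) : ℝ) + 1)
    else 0

/-- `A` is diagonalizable over the reals. -/
def RealDiagonalizable {n : ℕ} (A : Matrix (Fin n) (Fin n) ℝ) : Prop :=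
  ∃ P D : Matrix (Fin n) (Fin n) ℝ, IsUnit P.det ∧ D.IsDiag ∧ A = P * D * P⁻¹


noncomputable def U : Polynomial ℝ := X ^ 2 - 1
noncomputable def W (n : ℕ) : Polynomial ℝ := derivative^[n] (U ^ n)
noncomputable def Y (n : ℕ) : Polynomial ℝ := derivative^[n] (U ^ (n + 1))

lemma ld1 (m : ℕ) (f : Polynomial ℝ) :
    derivative^[m + 1] (X * f) =
      X * derivative^[m + 1] f + ((m : Polynomial ℝ) + 1) * derivative^[m] f := by
  induction m generalizing f with
  | zero => simp [derivative_mul]; ring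
  | succ m ih =>
    rw [Function.iterate_succ_apply' , ih, Function.iterate_succ_apply' derivative (m+1),
      Function.iterate_succ_apply' derivative m]
    simp [derivative_mul]
    ring

lemma ld2 (m : ℕ) (f : Polynomial ℝ) :
    derivative^[m + 2] (U * f) =
      U * derivative^[m + 2] f + (2 * ((m : Polynomial ℝ) + 2)) * (X * derivative^[m + 1] f)
        + (((m : Polynomial ℝ) + 2) * ((m : Polynomial ℝ) + 1)) * derivative^[m] f := by
  induction m generalizing f with
  | zero =>
    show derivative (derivative (U * f)) = _
    simp [U, derivative_mul, map_ofNat]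
    ring
  | succ m ih =>
    rw [Function.iterate_succ_apply' derivative (m+2), ih,
      Function.iterate_succ_apply' derivative (m+2), Function.iterate_succ_apply' derivative (m+1),
      Function.iterate_succ_apply' derivative m]
    simp [U, derivative_mul, map_ofNat]
    ring

lemma Cpush (r : ℝ) : ∀ (k : ℕ), (C ((k : ℝ)) : Polynomial ℝ) = (k : Polynomial ℝ) :=
  fun k => map_natCast C k

lemma dU (k : ℕ) : derivative (U ^ (k + 1)) = C (2 * ((k : ℝ) + 1)) * (X * U ^ k) := by
  rw [derivative_pow]
  simp [U, map_ofNat, _root_.map_mul, _root_.map_add, map_natCast]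
  push_cast [map_natCast]
  ring

lemma F1 (k : ℕ) : W (k + 2) =
    (2 * ((k : Polynomial ℝ) + 2)) * (X * W (k + 1))
      + (2 * ((k : Polynomial ℝ) + 2) * ((k : Polynomial ℝ) + 1)) * Y k := by
  have h1 : W (k + 2) = derivative^[k + 1] (derivative (U ^ (k + 2))) := by
    rw [W, Function.iterate_succ_apply]
  rw [h1, dU (k + 1), iterate_derivative_C_mul, ld1 k (U ^ (k + 1))]
  rw [show derivative^[k+1] (U ^ (k+1)) = W (k+1) from rfl,
    show derivative^[k] (U ^ (k+1)) = Y k from rfl]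
  push_cast [map_natCast, map_ofNat, _root_.map_mul, _root_.map_add, _root_.map_one]
  ring

lemma F2 (k : ℕ) : U * derivative (W (k + 1)) =
    (((k : Polynomial ℝ) + 1) * ((k : Polynomial ℝ) + 2)) * Y k := by
  have hB : derivative^[k + 2] (U * U ^ (k + 1)) =
      U * derivative (W (k + 1)) + (2 * ((k : Polynomial ℝ) + 2)) * (X * W (k + 1))
        + (((k : Polynomial ℝ) + 2) * ((k : Polynomial ℝ) + 1)) * Y k := by
    rw [ld2 k (U ^ (k + 1))]
    rw [show derivative^[k+2] (U ^ (k+1)) = derivative (derivative^[k+1] (U ^ (k+1))) from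
      Function.iterate_succ_apply' derivative (k+1) _]
    rfl
  have hA : derivative^[k + 2] (U * U ^ (k + 1)) = W (k + 2) := by
    rw [← pow_succ']
    rfl
  rw [hA, F1 k] at hB
  linear_combination -hB

lemma dY (k : ℕ) : derivative (Y k) = W (k + 1) :=
  (Function.iterate_succ_apply' derivative k (U ^ (k + 1))).symm

lemma R2 (k : ℕ) : derivative (W (k + 2)) =
    (2 * ((k : Polynomial ℝ) + 2)) * (X * derivative (W (k + 1)))
      + (2 * ((k : Polynomial ℝ) + 2) ^ 2) * W (k + 1) := by
  have h := congrArg derivative (F1 k)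
  simp only [derivative_add, derivative_mul, derivative_X, dY, derivative_natCast,
    derivative_ofNat, derivative_one, derivative_add] at h
  simp at h
  linear_combination h

lemma F3' (k : ℕ) : U * derivative (W (k + 2)) =
    ((k : Polynomial ℝ) + 2) * (X * W (k + 2)) - (2 * ((k : Polynomial ℝ) + 2) ^ 2) * W (k + 1) := by
  have hU : U = X ^ 2 - 1 := rfl
  have hR2 := R2 k
  have hF1 := F1 k
  have hF2 := F2 k
  rw [hR2, hF1]
  linear_combination (2 * ((k : Polynomial ℝ) + 2) * X) * hF2
    + (2 * ((k : Polynomial ℝ) + 2) ^ 2 * W (k + 1)) * hU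

lemma F3 (k : ℕ) : U * derivative (W (k + 1)) =
    ((k : Polynomial ℝ) + 1) * (X * W (k + 1)) - (2 * ((k : Polynomial ℝ) + 1) ^ 2) * W k := by
  cases k with
  | zero =>
    show U * derivative (W 1) = _
    have h1 : W 1 = derivative (U ^ 1) := rfl
    have h0 : W 0 = 1 := rfl
    rw [h1, h0]
    simp [U, map_ofNat]
    ring
  | succ n =>
    push_cast
    linear_combination F3' n

lemma F4 (k : ℕ) : W (k + 2) =
    (4 * (k : Polynomial ℝ) + 6) * (X * W (k + 1)) - (4 * ((k : Polynomial ℝ) + 1) ^ 2) * W k := by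
  linear_combination F1 k - 2 * F2 k + 2 * F3 k

noncomputable def rr (n : ℕ) : ℝ := ((2 ^ n * n.factorial : ℕ) : ℝ)

lemma rr_pos (n : ℕ) : 0 < rr n := by
  have : 0 < 2 ^ n * n.factorial := Nat.mul_pos (Nat.pow_pos (by norm_num)) n.factorial_pos
  rw [rr]
  exact_mod_cast this

lemma rr_succ (n : ℕ) : rr (n + 1) = 2 * ((n : ℝ) + 1) * rr n := by
  simp [rr, Nat.factorial_succ]
  push_cast
  ring

lemma legendreP_eq (n : ℕ) : legendreP n = C (1 / rr n) * W n := rfl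

lemma legendreP_zero : legendreP 0 = 1 := by
  simp [legendreP]

lemma legendreP_one : legendreP 1 = X := by
  have : legendreP 1 = C (1/2) * derivative ((X ^ 2 - 1 : Polynomial ℝ) ^ 1) := by
    simp [legendreP]
  rw [this]
  simp [map_ofNat]
  rw [show ((1 + 1 : Polynomial ℝ) * X) = C 2 * X by rw [one_add_one_eq_two]; simp [map_ofNat], ← mul_assoc, ← C_mul]
  norm_num

lemma bonnet (n : ℕ) (x : ℝ) :
    x * (legendreP n).eval x =
      (((n : ℝ) + 1) / (2 * (n : ℝ) + 1)) * (legendreP (n + 1)).eval x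
        + ((n : ℝ) / (2 * (n : ℝ) + 1)) * (legendreP (n - 1)).eval x := by
  cases n with
  | zero => norm_num [legendreP_zero, legendreP_one]
  | succ k =>
    have hF4 := congrArg (Polynomial.eval x) (F4 k)
    simp only [eval_mul, eval_add, eval_sub, eval_natCast, eval_ofNat, eval_pow, eval_X,
      eval_one] at hF4
    have e0 : (legendreP (k + 1 - 1)) = C (1 / rr k) * W k := legendreP_eq k
    have e1 : (legendreP (k + 1)) = C (1 / rr (k + 1)) * W (k + 1) := legendreP_eq (k + 1)
    have e2 : (legendreP (k + 1 + 1)) = C (1 / rr (k + 2)) * W (k + 2) := legendreP_eq (k + 2)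
    rw [e0, e1, e2]
    simp only [eval_mul, eval_C]
    rw [hF4, rr_succ (k + 1), rr_succ k]
    have h0 : rr k ≠ 0 := ne_of_gt (rr_pos k)
    have h1 : (2 * ((k : ℝ) + 1) + 1) ≠ 0 := by positivity
    have h2 : ((k : ℝ) + 1) ≠ 0 := by positivity
    have h3 : ((k : ℝ) + 2) ≠ 0 := by positivity
    push_cast
    field_simp
    ring

lemma mulVec_eigen (N : ℕ) (a : Fin (N + 1) → ℝ) (x : ℝ)
    (hx : (((N : ℝ) + 1) / (2 * (N : ℝ) + 1)) * (legendreP (N + 1)).eval x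
        + ((N : ℝ) / (2 * (N : ℝ) + 1)) * (legendreP (N - 1)).eval x
        = ∑ k : Fin (N + 1), a k * (legendreP (k : ℕ)).eval x) :
    momentA N a *ᵥ (fun i : Fin (N + 1) => (legendreP (i : ℕ)).eval x)
      = x • (fun i : Fin (N + 1) => (legendreP (i : ℕ)).eval x) := by
  funext i
  show ∑ j : Fin (N + 1), momentA N a i j * (legendreP (j : ℕ)).eval x
      = x * (legendreP (i : ℕ)).eval x
  by_cases hiN : (i : ℕ) = N
  · have : ∀ j : Fin (N + 1), momentA N a i j = a j := fun j => by simp [momentA, hiN]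
    simp only [this]
    rw [← hx, hiN, ← bonnet N x]
  · have hlt : (i : ℕ) < N := lt_of_le_of_ne (Nat.lt_succ_iff.mp i.isLt) hiN
    by_cases hi0 : (i : ℕ) = 0
    · set j1 : Fin (N + 1) := ⟨(i : ℕ) + 1, by omega⟩ with hj1
      rw [Finset.sum_eq_single j1]
      · have hA : momentA N a i j1 = (((i : ℕ) : ℝ) + 1) / (2 * ((i : ℕ) : ℝ) + 1) := by
          simp [momentA, hiN, hj1]
        rw [hA, bonnet (i : ℕ) x]
        have : ((i : ℕ) : ℝ) / (2 * ((i : ℕ) : ℝ) + 1) = 0 := by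
          rw [hi0]; norm_num
        rw [this]
        simp [hj1]
      · intro j _ hj
        have hjv : (j : ℕ) ≠ (i : ℕ) + 1 := fun h => hj (Fin.ext (by simp [hj1, h]))
        have hjv2 : (i : ℕ) ≠ (j : ℕ) + 1 := by omega
        simp [momentA, hiN, hjv, hjv2]
      · intro h
        exact absurd (Finset.mem_univ j1) h
    · set j1 : Fin (N + 1) := ⟨(i : ℕ) + 1, by omega⟩ with hj1
      set j2 : Fin (N + 1) := ⟨(i : ℕ) - 1, by omega⟩ with hj2
      have hne : j1 ≠ j2 := by
        intro h
        have := congrArg (fun z : Fin (N + 1) => (z : ℕ)) h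
        simp [hj1, hj2] at this
        omega
      have hsub : ∑ j : Fin (N + 1), momentA N a i j * (legendreP (j : ℕ)).eval x
          = ∑ j ∈ ({j1, j2} : Finset (Fin (N + 1))),
              momentA N a i j * (legendreP (j : ℕ)).eval x := by
        refine (Finset.sum_subset (Finset.subset_univ _) ?_).symm
        intro j _ hj
        simp only [Finset.mem_insert, Finset.mem_singleton, not_or] at hj
        have hjv : (j : ℕ) ≠ (i : ℕ) + 1 := fun h => hj.1 (Fin.ext (by simp [hj1, h]))
        have hjv2 : (i : ℕ) ≠ (j : ℕ) + 1 := by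
          intro h
          exact hj.2 (Fin.ext (by simp [hj2]; omega))
        simp [momentA, hiN, hjv, hjv2]
      rw [hsub, Finset.sum_pair hne]
      have hA1 : momentA N a i j1 = (((i : ℕ) : ℝ) + 1) / (2 * ((i : ℕ) : ℝ) + 1) := by
        simp [momentA, hiN, hj1]
      have hA2 : momentA N a i j2 = ((i : ℕ) : ℝ) / (2 * ((i : ℕ) : ℝ) + 1) := by
        have hval2 : ((j2 : ℕ)) = (i : ℕ) - 1 := rfl
        have h1 : ¬ ((j2 : ℕ) = (i : ℕ) + 1) := by omega
        have h2 : (i : ℕ) = (j2 : ℕ) + 1 := by omega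
        simp only [momentA]
        rw [if_neg hiN, if_neg h1, if_pos h2]
      rw [hA1, hA2]
      have e1 : ((j1 : ℕ)) = (i : ℕ) + 1 := rfl
      have e2 : ((j2 : ℕ)) = (i : ℕ) - 1 := rfl
      rw [e1, e2]
      exact (bonnet (i : ℕ) x).symm

lemma charpoly_eval_eq (N : ℕ) (A : Matrix (Fin (N + 1)) (Fin (N + 1)) ℝ) (x : ℝ) :
    A.charpoly.eval x = (x • (1 : Matrix (Fin (N + 1)) (Fin (N + 1)) ℝ) - A).det := by
  have h : (charmatrix A).map ⇑(Polynomial.evalRingHom x) = x • 1 - A := by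
    ext i j
    by_cases hij : i = j
    · subst hij; simp [charmatrix_apply, Matrix.smul_apply, Matrix.one_apply, coe_evalRingHom]
    · simp [charmatrix_apply, Matrix.smul_apply, Matrix.one_apply, hij, coe_evalRingHom]
  rw [Matrix.charpoly, show (Polynomial.eval x : Polynomial ℝ → ℝ) = ⇑(Polynomial.evalRingHom x) from rfl,
    RingHom.map_det, RingHom.mapMatrix_apply, h]

lemma charpoly_root_of (N : ℕ) (A : Matrix (Fin (N + 1)) (Fin (N + 1)) ℝ) (x : ℝ)
    (v : Fin (N + 1) → ℝ) (hv : v ≠ 0) (h : A *ᵥ v = x • v) :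
    A.charpoly.eval x = 0 := by
  rw [charpoly_eval_eq]
  rw [← Matrix.exists_mulVec_eq_zero_iff]
  refine ⟨v, hv, ?_⟩
  rw [Matrix.sub_mulVec, Matrix.smul_mulVec, Matrix.one_mulVec, h, sub_self]


theorem momentA_realDiagonalizable (N : ℕ) (a : Fin (N + 1) → ℝ)
    (qtop : Polynomial ℝ)
    (hqtop : qtop =
      Polynomial.C (((N : ℝ) + 1) / (2 * (N : ℝ) + 1)) * legendreP (N + 1) +
        Polynomial.C ((N : ℝ) / (2 * (N : ℝ) + 1)) * legendreP (N - 1) -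
        ∑ k : Fin (N + 1), Polynomial.C (a k) * legendreP (k : ℕ))
    (hsimple : qtop.roots.toFinset.card = N + 1) :
    (Matrix.charpoly (momentA N a)).roots.toFinset.card = N + 1 ∧
      RealDiagonalizable (momentA N a) := by
  classical
  -- eigenvector for each root of qtop
  have heig : ∀ x : ℝ, qtop.IsRoot x →
      momentA N a *ᵥ (fun i : Fin (N + 1) => (legendreP (i : ℕ)).eval x)
        = x • (fun i : Fin (N + 1) => (legendreP (i : ℕ)).eval x) := by
    intro x hx
    apply mulVec_eigen
    have := hx
    rw [Polynomial.IsRoot, hqtop] at this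
    simp only [Polynomial.eval_sub, Polynomial.eval_add, Polynomial.eval_mul,
      Polynomial.eval_C, Polynomial.eval_finset_sum] at this
    linarith [this]
  have hvne : ∀ x : ℝ, (fun i : Fin (N + 1) => (legendreP (i : ℕ)).eval x) ≠ 0 := by
    intro x h
    have := congrFun h ⟨0, Nat.succ_pos N⟩
    simp [legendreP_zero] at this
  have hroot : ∀ x : ℝ, qtop.IsRoot x → (momentA N a).charpoly.IsRoot x := by
    intro x hx
    exact charpoly_root_of N (momentA N a) x _ (hvne x) (heig x hx)
  have hchar_ne : (momentA N a).charpoly ≠ 0 := (Matrix.charpoly_monic _).ne_zero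
  have hsubset : qtop.roots.toFinset ⊆ (momentA N a).charpoly.roots.toFinset := by
    intro z hz
    rw [Multiset.mem_toFinset] at hz ⊢
    rw [Polynomial.mem_roots hchar_ne]
    exact hroot z (Polynomial.isRoot_of_mem_roots hz)
  have hcard : (Matrix.charpoly (momentA N a)).roots.toFinset.card = N + 1 := by
    have h1 : N + 1 ≤ (Matrix.charpoly (momentA N a)).roots.toFinset.card := by
      have := Finset.card_le_card hsubset; omega
    have h2 : (Matrix.charpoly (momentA N a)).roots.toFinset.card ≤ N + 1 := by
      calc (Matrix.charpoly (momentA N a)).roots.toFinset.card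
          ≤ Multiset.card (Matrix.charpoly (momentA N a)).roots := Multiset.toFinset_card_le _
        _ ≤ (Matrix.charpoly (momentA N a)).natDegree := Polynomial.card_roots' _
        _ = N + 1 := by rw [Matrix.charpoly_natDegree_eq_dim]; simp
    omega
  refine ⟨hcard, ?_⟩
  -- enumeration of roots
  let T := qtop.roots.toFinset
  have hT : T.card = N + 1 := hsimple
  let e : Fin (N + 1) ≃ {z // z ∈ T} := (finCongr hT.symm).trans T.equivFin.symm
  let μ : Fin (N + 1) → ℝ := fun k => (e k : ℝ)
  have hμinj : Function.Injective μ := fun k l h =>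
    e.injective (Subtype.ext h)
  have hμroot : ∀ k, qtop.IsRoot (μ k) := fun k =>
    Polynomial.isRoot_of_mem_roots (Multiset.mem_toFinset.mp (e k).2)
  let Pm : Matrix (Fin (N + 1)) (Fin (N + 1)) ℝ :=
    Matrix.of fun i k => (legendreP (i : ℕ)).eval (μ k)
  have hAP : momentA N a * Pm = Pm * Matrix.diagonal μ := by
    ext i k
    rw [Matrix.mul_apply, Matrix.mul_diagonal]
    have := congrFun (heig (μ k) (hμroot k)) i
    simp only [Matrix.mulVec, dotProduct, Pi.smul_apply, smul_eq_mul] at this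
    rw [show ∑ j, momentA N a i j * Pm j k
        = ∑ j, momentA N a i j * (legendreP (j : ℕ)).eval (μ k) from rfl, this]
    simp [Pm, mul_comm]
  have hcols : LinearIndependent ℝ (fun k => Pmᵀ k) := by
    apply Module.End.eigenvectors_linearIndependent' ((momentA N a).mulVecLin) μ hμinj
    intro k
    constructor
    · rw [Module.End.mem_eigenspace_iff]
      have := heig (μ k) (hμroot k)
      exact this
    · exact hvne (μ k)
  have hunit : IsUnit Pm := Matrix.linearIndependent_cols_iff_isUnit.mp hcols
  have hdet : IsUnit Pm.det := (Matrix.isUnit_iff_isUnit_det Pm).mp hunit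
  refine ⟨Pm, Matrix.diagonal μ, hdet, Matrix.isDiag_diagonal μ, ?_⟩
  calc momentA N a = momentA N a * (Pm * Pm⁻¹) := by rw [Matrix.mul_nonsing_inv Pm hdet, mul_one]
    _ = (momentA N a * Pm) * Pm⁻¹ := by rw [mul_assoc]
    _ = Pm * Matrix.diagonal μ * Pm⁻¹ := by rw [hAP]
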